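/- (Follow-The-Leader regret bound for strongly convex losses) Let μ > 0 and suppose each loss ℓ_t : E → ℝ is μ-strongly convex on Z and differentiable with gradient ∇ℓ_t. Suppose z_1 ∈ Z is an arbitrary initial point and, for t = 2, …, T, the point z_t ∈ Z minimizes z ↦ Σ_{s=1}^{t−1} α_s ℓ_s(z) over Z. Then for every z* ∈ Z: Σ_{t=1}^T α_t(ℓ_t(z_t) − ℓ_t(z*)) ≤ Σ_{t=1}^T (2 α_t² / (μ Σ_{s=1}^t α_s)) ‖∇ℓ_t(z_t)‖². -/

import Mathlib

open Filter Set Topology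



/-- Tangent-line inequality for strongly convex differentiable functions. -/
lemma ftl_tangent {E : Type*} [NormedAddCommGroup E] [InnerProductSpace ℝ E]
    {Z : Set E} {μ : ℝ} {f : E → ℝ} (hf : StrongConvexOn Z μ f)
    {g x y : E} (hd : HasFDerivAt f (innerSL ℝ g) x) (hx : x ∈ Z) (hy : y ∈ Z) :
    f x + (inner ℝ g (y - x) : ℝ) + μ / 2 * ‖y - x‖ ^ 2 ≤ f y := by
  set φ : ℝ → ℝ := fun θ => f (x + θ • (y - x)) with hφ
  have hγ : HasDerivAt (fun θ : ℝ => x + θ • (y - x)) (y - x) 0 := by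
    simpa using ((hasDerivAt_id (0:ℝ)).smul_const (y - x)).const_add x
  have hder : HasDerivAt φ ((inner ℝ g (y - x) : ℝ)) 0 := by
    have hd' : HasFDerivAt f (innerSL ℝ g) ((fun θ : ℝ => x + θ • (y - x)) 0) := by
      simpa using hd
    exact hd'.comp_hasDerivAt 0 hγ
  have hslope : Tendsto (slope φ 0) (𝓝[>] (0:ℝ)) (𝓝 ((inner ℝ g (y - x) : ℝ))) :=
    ((hasDerivAt_iff_tendsto_slope.mp hder).mono_left
      (nhdsWithin_mono 0 (fun θ hθ => ne_of_gt hθ)))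
  have hψ : Tendsto (fun θ : ℝ => f y - f x - (1 - θ) * (μ / 2 * ‖y - x‖ ^ 2))
      (𝓝[>] (0:ℝ)) (𝓝 (f y - f x - μ / 2 * ‖y - x‖ ^ 2)) := by
    have hc : Continuous (fun θ : ℝ => f y - f x - (1 - θ) * (μ / 2 * ‖y - x‖ ^ 2)) := by
      continuity
    have h2 := (hc.tendsto 0).mono_left (nhdsWithin_le_nhds (s := Ioi (0:ℝ)))
    simpa using h2
  have hev : ∀ᶠ θ in 𝓝[>] (0:ℝ),
      slope φ 0 θ ≤ f y - f x - (1 - θ) * (μ / 2 * ‖y - x‖ ^ 2) := by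
    filter_upwards [Ioo_mem_nhdsGT_of_mem (show (0:ℝ) ∈ Ico (0:ℝ) 1 by constructor <;> norm_num)]
      with θ hθ
    obtain ⟨hθ0, hθ1⟩ := hθ
    have hcomb := hf.2 hy hx (le_of_lt hθ0) (by linarith : (0:ℝ) ≤ 1 - θ) (by ring)
    have hpt : x + θ • (y - x) = θ • y + (1 - θ) • x := by module
    rw [slope_def_field]
    have : φ θ ≤ θ * f y + (1 - θ) * f x - θ * (1 - θ) * (μ / 2 * ‖y - x‖ ^ 2) := by
      rw [hφ]; simp only [hpt]
      simpa [smul_eq_mul, mul_comm] using hcomb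
    have hφ0 : φ 0 = f x := by simp [hφ]
    rw [sub_zero, hφ0, div_le_iff₀ hθ0]
    nlinarith [this]
  have := le_of_tendsto_of_tendsto hslope hψ hev
  linarith

/-- A nonnegative combination of `μ`-strongly convex functions is strongly convex. -/
lemma ftl_sum_sc {E : Type*} [NormedAddCommGroup E] [InnerProductSpace ℝ E]
    {Z : Set E} (hZconv : Convex ℝ Z) {μ : ℝ} (S : Finset ℕ) (α : ℕ → ℝ) (ℓ : ℕ → E → ℝ)
    (hα : ∀ s ∈ S, 0 ≤ α s) (hsc : ∀ s ∈ S, StrongConvexOn Z μ (ℓ s)) :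
    StrongConvexOn Z (μ * ∑ s ∈ S, α s) (fun u => ∑ s ∈ S, α s * ℓ s u) := by
  refine ⟨hZconv, fun x hx y hy a b ha hb hab => ?_⟩
  have step : ∑ s ∈ S, α s * ℓ s (a • x + b • y)
      ≤ ∑ s ∈ S, α s * (a * ℓ s x + b * ℓ s y - a * b * (μ / 2 * ‖x - y‖ ^ 2)) := by
    refine Finset.sum_le_sum fun s hs => mul_le_mul_of_nonneg_left ?_ (hα s hs)
    simpa [smul_eq_mul] using (hsc s hs).2 hx hy ha hb hab
  refine step.trans (le_of_eq ?_)
  simp only [smul_eq_mul]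
  have hA : a * b * ((μ * ∑ s ∈ S, α s) / 2 * ‖x - y‖ ^ 2)
      = ∑ s ∈ S, α s * (a * b * (μ / 2 * ‖x - y‖ ^ 2)) := by
    rw [← Finset.sum_mul]; ring
  rw [hA, Finset.mul_sum, Finset.mul_sum, ← Finset.sum_add_distrib, ← Finset.sum_sub_distrib]
  exact Finset.sum_congr rfl fun s _ => by ring

/-- Quadratic growth at a minimizer of a strongly convex function. -/
lemma ftl_growth {E : Type*} [NormedAddCommGroup E] [InnerProductSpace ℝ E]
    {Z : Set E} {m : ℝ} {f : E → ℝ} (hf : StrongConvexOn Z m f)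
    {z₀ : E} (hz₀ : z₀ ∈ Z) (hmin : ∀ u ∈ Z, f z₀ ≤ f u) {u : E} (hu : u ∈ Z) :
    f z₀ + m / 2 * ‖u - z₀‖ ^ 2 ≤ f u := by
  have key : ∀ a ∈ Ioo (0:ℝ) 1, (1 - a) * (m / 2 * ‖u - z₀‖ ^ 2) ≤ f u - f z₀ := by
    rintro a ⟨ha0, ha1⟩
    have h2 := hf.2 hu hz₀ (le_of_lt ha0) (by linarith : (0:ℝ) ≤ 1 - a) (by ring)
    have hmem : a • u + (1 - a) • z₀ ∈ Z :=
      hf.1 hu hz₀ (le_of_lt ha0) (by linarith) (by ring)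
    have h3 := hmin _ hmem
    have h4 : a * ((1 - a) * (m / 2 * ‖u - z₀‖ ^ 2)) ≤ a * (f u - f z₀) := by
      simp only [smul_eq_mul] at h2
      nlinarith [h2, h3]
    exact le_of_mul_le_mul_left h4 ha0
  have htend : Tendsto (fun a : ℝ => (1 - a) * (m / 2 * ‖u - z₀‖ ^ 2)) (𝓝[>] (0:ℝ))
      (𝓝 (m / 2 * ‖u - z₀‖ ^ 2)) := by
    have hc : Continuous (fun a : ℝ => (1 - a) * (m / 2 * ‖u - z₀‖ ^ 2)) := by continuity
    have h2 := (hc.tendsto 0).mono_left (nhdsWithin_le_nhds (s := Ioi (0:ℝ)))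
    simpa using h2
  have hev : ∀ᶠ a in 𝓝[>] (0:ℝ), (1 - a) * (m / 2 * ‖u - z₀‖ ^ 2) ≤ f u - f z₀ := by
    filter_upwards [Ioo_mem_nhdsGT_of_mem (show (0:ℝ) ∈ Ico (0:ℝ) 1 by constructor <;> norm_num)]
      with a ha using key a ha
  have := le_of_tendsto htend hev
  linarith

section
variable {E : Type*} [NormedAddCommGroup E] [InnerProductSpace ℝ E]

theorem ftl_aux (Z : Set E) (hZconv : Convex ℝ Z)
    (μ : ℝ) (hμ : 0 < μ) (α : ℕ → ℝ) (ℓ : ℕ → E → ℝ) (gℓ : ℕ → E → E) (z : ℕ → E)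
    (T : ℕ)
    (hα : ∀ t ∈ Finset.Icc 1 T, 0 < α t)
    (hℓsc : ∀ t ∈ Finset.Icc 1 T, StrongConvexOn Z μ (ℓ t))
    (hℓdiff : ∀ t ∈ Finset.Icc 1 T, ∀ x : E, HasFDerivAt (ℓ t) (innerSL ℝ (gℓ t x)) x)
    (hz1 : z 1 ∈ Z)
    (hz : ∀ t ∈ Finset.Icc 2 T, z t ∈ Z ∧ ∀ u ∈ Z,
      (∑ s ∈ Finset.Icc 1 (t-1), α s * ℓ s (z t)) ≤ ∑ s ∈ Finset.Icc 1 (t-1), α s * ℓ s u)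
    (zstar : E) (hzstar : zstar ∈ Z) :
    ∑ t ∈ Finset.Icc 1 T, α t * (ℓ t (z t) - ℓ t zstar)
      ≤ ∑ t ∈ Finset.Icc 1 T,
          (2 * (α t)^2 / (μ * ∑ s ∈ Finset.Icc 1 t, α s)) * ‖gℓ t (z t)‖^2 := by
  induction T generalizing zstar with
  | zero => simp
  | succ T IH =>
    have hsub : ∀ t ∈ Finset.Icc 1 T, t ∈ Finset.Icc 1 (T+1) := by
      intro t ht; simp only [Finset.mem_Icc] at *; omega
    have hsub2 : ∀ t ∈ Finset.Icc 2 T, t ∈ Finset.Icc 2 (T+1) := by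
      intro t ht; simp only [Finset.mem_Icc] at *; omega
    have hN : T + 1 ∈ Finset.Icc 1 (T+1) := by simp
    -- z (T+1) ∈ Z
    have hzN : z (T+1) ∈ Z := by
      rcases Nat.eq_zero_or_pos T with h0 | h1
      · subst h0; exact hz1
      · exact (hz (T+1) (by simp only [Finset.mem_Icc]; omega)).1
    -- minimality of z (T+1) for F_T
    have hmin : ∀ u ∈ Z, (∑ s ∈ Finset.Icc 1 T, α s * ℓ s (z (T+1)))
        ≤ ∑ s ∈ Finset.Icc 1 T, α s * ℓ s u := by
      rcases Nat.eq_zero_or_pos T with h0 | h1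
      · subst h0; intro u hu; simp
      · intro u hu
        have := (hz (T+1) (by simp only [Finset.mem_Icc]; omega)).2 u hu
        simpa using this
    have hA0 : (0:ℝ) ≤ ∑ s ∈ Finset.Icc 1 T, α s :=
      Finset.sum_nonneg fun s hs => (hα s (hsub s hs)).le
    have hαN : 0 < α (T+1) := hα _ hN
    -- strong convexity of F_T and quadratic growth
    have hF : StrongConvexOn Z (μ * ∑ s ∈ Finset.Icc 1 T, α s)
        (fun u => ∑ s ∈ Finset.Icc 1 T, α s * ℓ s u) :=
      ftl_sum_sc hZconv _ α ℓ (fun s hs => (hα s (hsub s hs)).le)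
        (fun s hs => hℓsc s (hsub s hs))
    have hgrow := ftl_growth hF hzN hmin hzstar
    -- induction hypothesis with comparator z (T+1)
    have hIH := IH (fun t ht => hα t (hsub t ht)) (fun t ht => hℓsc t (hsub t ht))
      (fun t ht => hℓdiff t (hsub t ht)) (fun t ht => hz t (hsub2 t ht)) (z (T+1)) hzN
    -- tangent bound for the last loss
    have htan := ftl_tangent (hℓsc (T+1) hN) (hℓdiff (T+1) hN (z (T+1))) hzN hzstar
    set r : ℝ := ‖zstar - z (T+1)‖ with hr
    set G : ℝ := ‖gℓ (T+1) (z (T+1))‖ with hG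
    have hinner : -(G * r) ≤ (inner ℝ (gℓ (T+1) (z (T+1))) (zstar - z (T+1)) : ℝ) := by
      have h1 := abs_real_inner_le_norm (gℓ (T+1) (z (T+1))) (zstar - z (T+1))
      have h2 := neg_abs_le (inner ℝ (gℓ (T+1) (z (T+1))) (zstar - z (T+1)) : ℝ)
      rw [hr, hG]; linarith
    have h6 : α (T+1) * (ℓ (T+1) (z (T+1)) - ℓ (T+1) zstar)
        ≤ α (T+1) * G * r - α (T+1) * (μ / 2) * r ^ 2 := by
      have h7 : ℓ (T+1) (z (T+1)) - ℓ (T+1) zstar ≤ G * r - μ / 2 * r ^ 2 := by linarith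
      nlinarith [mul_le_mul_of_nonneg_left h7 hαN.le]
    -- algebra for the final bound
    have hbpos : 0 < μ * ((∑ s ∈ Finset.Icc 1 T, α s) + α (T+1)) := by positivity
    have h8 : α (T+1) * G * r - α (T+1) * (μ / 2) * r ^ 2
          - μ * (∑ s ∈ Finset.Icc 1 T, α s) / 2 * r ^ 2
        ≤ 2 * (α (T+1))^2 / (μ * ((∑ s ∈ Finset.Icc 1 T, α s) + α (T+1))) * G ^ 2 := by
      rw [div_mul_eq_mul_div (2 * (α (T+1))^2) (μ * ((∑ s ∈ Finset.Icc 1 T, α s) + α (T+1))) (G^2),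
        le_div_iff₀ hbpos]
      nlinarith [sq_nonneg (α (T+1) * G - μ * ((∑ s ∈ Finset.Icc 1 T, α s) + α (T+1)) * r),
        sq_nonneg (α (T+1) * G), sq_nonneg r, mul_pos hμ hαN]
    -- split sums at T+1
    rw [Finset.sum_Icc_succ_top (by omega : 1 ≤ T + 1), Finset.sum_Icc_succ_top (by omega : 1 ≤ T + 1)]
    have e : ∑ t ∈ Finset.Icc 1 T, α t * (ℓ t (z t) - ℓ t zstar)
        = (∑ t ∈ Finset.Icc 1 T, α t * (ℓ t (z t) - ℓ t (z (T+1))))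
          + ((∑ s ∈ Finset.Icc 1 T, α s * ℓ s (z (T+1)))
            - (∑ s ∈ Finset.Icc 1 T, α s * ℓ s zstar)) := by
      rw [← Finset.sum_sub_distrib, ← Finset.sum_add_distrib]
      exact Finset.sum_congr rfl fun t _ => by ring
    have eA : ∑ s ∈ Finset.Icc 1 (T+1), α s = (∑ s ∈ Finset.Icc 1 T, α s) + α (T+1) :=
      Finset.sum_Icc_succ_top (by omega) _
    rw [e, eA]
    linarith [hIH, hgrow, h6, h8]
end


open scoped BigOperators

/-- Follow-The-Leader regret bound for strongly convex losses. -/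
theorem ftl_regret_bound
    {E : Type*} [NormedAddCommGroup E] [InnerProductSpace ℝ E]
    (Z : Set E) (hZne : Z.Nonempty) (hZcl : IsClosed Z) (hZconv : Convex ℝ Z)
    (T : ℕ) (hT : 1 ≤ T)
    (α : ℕ → ℝ) (hα : ∀ t ∈ Finset.Icc 1 T, 0 < α t)
    (μ : ℝ) (hμ : 0 < μ)
    (ℓ : ℕ → E → ℝ) (gℓ : ℕ → E → E)
    (hℓsc : ∀ t ∈ Finset.Icc 1 T, StrongConvexOn Z μ (ℓ t))
    -- each `ℓ t` is differentiable with gradient `gℓ t`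
    (hℓdiff : ∀ t ∈ Finset.Icc 1 T, ∀ x : E, HasFDerivAt (ℓ t) (innerSL ℝ (gℓ t x)) x)
    (z : ℕ → E) (hz1 : z 1 ∈ Z)
    -- for `t = 2, …, T`, `z t` minimizes `Σ_{s<t} α_s ℓ_s` over `Z`
    (hz : ∀ t ∈ Finset.Icc 2 T, z t ∈ Z ∧ ∀ u ∈ Z,
      (∑ s ∈ Finset.Icc 1 (t-1), α s * ℓ s (z t)) ≤ ∑ s ∈ Finset.Icc 1 (t-1), α s * ℓ s u)
    (zstar : E) (hzstar : zstar ∈ Z) :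
    ∑ t ∈ Finset.Icc 1 T, α t * (ℓ t (z t) - ℓ t zstar)
      ≤ ∑ t ∈ Finset.Icc 1 T,
          (2 * (α t)^2 / (μ * ∑ s ∈ Finset.Icc 1 t, α s)) * ‖gℓ t (z t)‖^2 :=
  ftl_aux Z hZconv μ hμ α ℓ gℓ z T hα hℓsc hℓdiff hz1 hz zstar hzstar
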